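/- Let k ≥ 3 and let w_k be the multiplicative arithmetic function defined on prime powers by w_k(p^{uk+1}) = k·p^{-u-1/2} for u ≥ 0, and w_k(p^{uk+v}) = p^{-u-1} for u ≥ 0 and 2 ≤ v ≤ k. Then for every positive integer q one has w_k(q) ≥ q^{-1/2}. -/

import Mathlib

theorem stmt_2 (k : ℕ) (hk : 3 ≤ k) (w : ℕ → ℝ)
    (hw1 : w 1 = 1)
    (hmul : ∀ m n : ℕ, Nat.Coprime m n → w (m * n) = w m * w n)
    (hp1 : ∀ p u : ℕ, p.Prime → w (p ^ (u * k + 1)) = (k : ℝ) * (p : ℝ) ^ (-(u : ℝ) - 1/2))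
    (hp2 : ∀ p u v : ℕ, p.Prime → 2 ≤ v → v ≤ k →
      w (p ^ (u * k + v)) = (p : ℝ) ^ (-(u : ℝ) - 1)) :
    ∀ q : ℕ, 0 < q → (q : ℝ) ^ (-(1/2 : ℝ)) ≤ w q := by
  intro q
  induction q using Nat.recOnPosPrimePosCoprime with
  | prime_pow p e hp he =>
    intro _
    have hp1R : (1 : ℝ) < (p : ℝ) := by exact_mod_cast hp.one_lt
    have hp0R : (0 : ℝ) ≤ (p : ℝ) := by positivity
    have hkR : (3 : ℝ) ≤ (k : ℝ) := by exact_mod_cast hk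
    have hk0 : 0 < k := by omega
    -- write e = u * k + v with 1 ≤ v ≤ k
    obtain ⟨u, v, hv1, hvk, huv⟩ : ∃ u v, 1 ≤ v ∧ v ≤ k ∧ e = u * k + v := by
      have hmod : (e - 1) % k < k := Nat.mod_lt _ hk0
      have h2 : (e - 1) / k * k + (e - 1) % k = e - 1 := Nat.div_add_mod' (e - 1) k
      exact ⟨(e - 1) / k, (e - 1) % k + 1, by omega, by omega, by omega⟩
    rcases eq_or_lt_of_le hv1 with hv | hv2
    · -- v = 1
      have he1 : e = u * k + 1 := by omega
      rw [he1, hp1 p u hp]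
      push_cast
      rw [← Real.rpow_natCast (p : ℝ) (u * k + 1), ← Real.rpow_mul hp0R]
      calc (p : ℝ) ^ ((((u * k + 1 : ℕ) : ℝ)) * (-(1/2 : ℝ)))
          ≤ (p : ℝ) ^ (-(u : ℝ) - 1/2) := by
            apply Real.rpow_le_rpow_left_iff hp1R |>.mpr
            push_cast
            have hu0 : (0 : ℝ) ≤ (u : ℝ) := by positivity
            nlinarith
        _ ≤ (k : ℝ) * (p : ℝ) ^ (-(u : ℝ) - 1/2) := by
            nlinarith [Real.rpow_pos_of_pos (by linarith : (0:ℝ) < (p:ℝ)) (-(u : ℝ) - 1/2)]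
    · -- v ≥ 2
      rw [huv, hp2 p u v hp hv2 hvk]
      push_cast
      rw [← Real.rpow_natCast (p : ℝ) (u * k + v), ← Real.rpow_mul hp0R]
      apply Real.rpow_le_rpow_left_iff hp1R |>.mpr
      push_cast
      have hvR : (2 : ℝ) ≤ (v : ℝ) := by exact_mod_cast hv2
      have hu0 : (0 : ℝ) ≤ (u : ℝ) := by positivity
      nlinarith
  | zero => intro h; omega
  | one => intro _; simp [hw1]
  | coprime a b ha hb hab iha ihb =>
    intro _
    have ha0 : 0 < a := by omega
    have hb0 : 0 < b := by omega
    rw [hmul a b hab]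
    push_cast
    rw [Real.mul_rpow (by positivity) (by positivity)]
    exact mul_le_mul (iha ha0) (ihb hb0)
      (Real.rpow_nonneg (by positivity) _)
      ((Real.rpow_nonneg (by positivity) _).trans (iha ha0))
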